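/- Let d ≥ 1 and let c : {0,…,d} × {0,…,d} → ℝ satisfy c_{ii} = 0 for all i and the triangle inequality c_{ik} ≤ c_{ij} + c_{jk} for all i, j, k ∈ {0,…,d}. Let P := {x ∈ ℝ^d : x_i − x_j ≤ c_{ij} for all i ≠ j in {0,…,d}} (with the convention x_0 := 0), and for each i ∈ {0,…,d} define v_i ∈ ℝ^d by (v_i)_k := c_{ki} − c_{0i} for k = 1,…,d. Then P = tconv{v_0, v_1, …, v_d}. -/

import Mathlib

open Set

noncomputable section

/-- Extended (homogeneous) coordinates of a point of `TA^d ≅ ℝ^d`: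
the 0-th coordinate is normalized to `0`. -/
def ext {d : ℕ} (x : Fin d → ℝ) : Fin (d + 1) → ℝ := Fin.cons 0 x

/-- The tropical combination of `(l, x)` and `(m, y)`. -/
def tropComb {d : ℕ} (l m : ℝ) (x y : Fin d → ℝ) : Fin d → ℝ :=
  fun i => min (l + x i) (m + y i) - min l m

/-- A set is tropically convex if it is closed under tropical combinations. -/
def TropConvex {d : ℕ} (S : Set (Fin d → ℝ)) : Prop :=
  ∀ x ∈ S, ∀ y ∈ S, ∀ l m : ℝ, tropComb l m x y ∈ S

/-- The tropical convex hull: the intersection of all tropically convex supersets. -/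
def tconv {d : ℕ} (V : Set (Fin d → ℝ)) : Set (Fin d → ℝ) :=
  ⋂₀ {S : Set (Fin d → ℝ) | TropConvex S ∧ V ⊆ S}

/-- A tropical polytope is the tropical convex hull of a finite set. -/
def IsTropPolytope {d : ℕ} (P : Set (Fin d → ℝ)) : Prop :=
  ∃ V : Finset (Fin d → ℝ), P = tconv (V : Set (Fin d → ℝ))

/-- A polytrope is a tropical polytope which is also convex in the ordinary sense. -/
def IsPolytrope {d : ℕ} (P : Set (Fin d → ℝ)) : Prop :=
  IsTropPolytope P ∧ Convex ℝ P

lemma inf'_univ_fin_succ {n : ℕ} (h : Fin (n + 2) → ℝ) :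
    Finset.univ.inf' Finset.univ_nonempty h
      = min (h 0) (Finset.univ.inf' Finset.univ_nonempty (fun i : Fin (n + 1) => h i.succ)) := by
  apply le_antisymm
  · apply le_min
    · exact Finset.inf'_le _ (Finset.mem_univ _)
    · exact Finset.le_inf' _ _ fun i _ => Finset.inf'_le _ (Finset.mem_univ _)
  · apply Finset.le_inf'
    intro j _
    cases j using Fin.cases with
    | zero => exact min_le_left _ _
    | succ i => exact le_trans (min_le_right _ _) (Finset.inf'_le _ (Finset.mem_univ i))

lemma tropSpan_mem {d : ℕ} {S : Set (Fin d → ℝ)} (hS : TropConvex S) :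
    ∀ n (f : Fin (n + 1) → Fin d → ℝ), (∀ i, f i ∈ S) → ∀ lam : Fin (n + 1) → ℝ,
    (fun k => Finset.univ.inf' Finset.univ_nonempty (fun i => lam i + f i k)
      - Finset.univ.inf' Finset.univ_nonempty lam) ∈ S := by
  intro n
  induction n with
  | zero =>
    intro f hf lam
    have : (fun k => Finset.univ.inf' Finset.univ_nonempty (fun i => lam i + f i k)
      - Finset.univ.inf' Finset.univ_nonempty lam) = f 0 := by
      funext k
      simp [Finset.univ_unique]
    rw [this]; exact hf 0
  | succ n ih =>
    intro f hf lam
    have h0 := ih (fun i => f i.succ) (fun i => hf i.succ) (fun i => lam i.succ)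
    have h1 := hS _ h0 (f 0) (hf 0)
      (Finset.univ.inf' Finset.univ_nonempty (fun i : Fin (n+1) => lam i.succ)) (lam 0)
    have heq : tropComb (Finset.univ.inf' Finset.univ_nonempty (fun i : Fin (n+1) => lam i.succ)) (lam 0)
        (fun k => Finset.univ.inf' Finset.univ_nonempty (fun i : Fin (n+1) => lam i.succ + f i.succ k)
          - Finset.univ.inf' Finset.univ_nonempty (fun i : Fin (n+1) => lam i.succ)) (f 0)
        = (fun k => Finset.univ.inf' Finset.univ_nonempty (fun i => lam i + f i k)
          - Finset.univ.inf' Finset.univ_nonempty lam) := by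
      funext k
      unfold tropComb
      rw [inf'_univ_fin_succ (fun i => lam i + f i k), inf'_univ_fin_succ lam]
      ring_nf
      rw [min_comm _ (lam 0), min_comm _ (lam 0 + f 0 k)]
    rw [heq] at h1
    exact h1

/-- If `c` has zero diagonal and satisfies the triangle inequality, then the
polytope `P = {x : x_i - x_j ≤ c i j}` (with `x_0 := 0`) is the tropical convex hull of the
points `v_i` with `(v_i)_k = c k i - c 0 i` for `k = 1, …, d`. -/
theorem polytrope_tropical_vertices {d : ℕ} (hd : 1 ≤ d)
    (c : Fin (d + 1) → Fin (d + 1) → ℝ)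
    (hdiag : ∀ i, c i i = 0)
    (htri : ∀ i j k, c i k ≤ c i j + c j k) :
    {x : Fin d → ℝ | ∀ i j : Fin (d + 1), i ≠ j → ext x i - ext x j ≤ c i j} =
      tconv (Set.range fun i : Fin (d + 1) => fun k : Fin d => c k.succ i - c 0 i) := by

  set v : Fin (d + 1) → Fin d → ℝ := fun i k => c k.succ i - c 0 i with hv
  have hextv : ∀ t i, ext (v t) i = c i t - c 0 t := by
    intro t i
    cases i using Fin.cases with
    | zero => simp [_root_.ext, hdiag]
    | succ k => simp [_root_.ext, hv]
  have hPconv : TropConvex {x : Fin d → ℝ |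
      ∀ i j : Fin (d + 1), i ≠ j → ext x i - ext x j ≤ c i j} := by
    intro x hx y hy l m i j hij
    have hz : ∀ i, ext (tropComb l m x y) i
        = min (l + ext x i) (m + ext y i) - min l m := by
      intro i
      cases i using Fin.cases with
      | zero => simp [_root_.ext, tropComb]
      | succ k => simp [_root_.ext, tropComb]
    rw [hz, hz]
    rcases min_cases (l + ext x j) (m + ext y j) with ⟨h, _⟩ | ⟨h, _⟩
    · rw [h]
      have : min (l + ext x i) (m + ext y i) ≤ l + ext x i := min_le_left _ _
      have hx' := hx i j hij
      linarith
    · rw [h]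
      have : min (l + ext x i) (m + ext y i) ≤ m + ext y i := min_le_right _ _
      have hy' := hy i j hij
      linarith
  have hVP : Set.range v ⊆ {x : Fin d → ℝ |
      ∀ i j : Fin (d + 1), i ≠ j → ext x i - ext x j ≤ c i j} := by
    rintro _ ⟨t, rfl⟩ i j _
    rw [hextv, hextv]
    have := htri i j t
    linarith
  apply Set.Subset.antisymm
  · -- P ⊆ tconv V
    intro x hx
    intro S hS
    obtain ⟨hSconv, hVS⟩ := hS
    have key := tropSpan_mem hSconv d v (fun i => hVS ⟨i, rfl⟩)
      (fun i => ext x i + c 0 i)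
    have hxmem : ∀ i j : Fin (d + 1), ext x i ≤ ext x j + c i j := by
      intro i j
      by_cases h : i = j
      · subst h; simp [hdiag]
      · have := hx i j h; linarith
    have hA : ∀ k : Fin d, Finset.univ.inf' Finset.univ_nonempty
        (fun i => (ext x i + c 0 i) + v i k) = x k := by
      intro k
      have hfun : (fun i : Fin (d+1) => (ext x i + c 0 i) + v i k)
          = fun i => ext x i + c k.succ i := by
        funext i; simp only [hv]; ring
      rw [hfun]
      apply le_antisymm
      · have := Finset.inf'_le (b := k.succ)
          (fun i : Fin (d+1) => ext x i + c k.succ i) (Finset.mem_univ _)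
        exact le_of_le_of_eq this (by simp [hdiag, _root_.ext])
      · apply Finset.le_inf'
        intro i _
        have := hxmem k.succ i
        simpa [_root_.ext] using this
    have hB : Finset.univ.inf' Finset.univ_nonempty
        (fun i : Fin (d+1) => ext x i + c 0 i) = 0 := by
      apply le_antisymm
      · have := Finset.inf'_le (b := (0 : Fin (d+1)))
          (fun i : Fin (d+1) => ext x i + c 0 i) (Finset.mem_univ _)
        exact le_of_le_of_eq this (by simp [hdiag, _root_.ext])
      · apply Finset.le_inf'
        intro i _
        have := hxmem 0 i
        simpa [_root_.ext] using this
    have : (fun k => Finset.univ.inf' Finset.univ_nonempty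
        (fun i => (ext x i + c 0 i) + v i k)
        - Finset.univ.inf' Finset.univ_nonempty (fun i => ext x i + c 0 i)) = x := by
      funext k
      rw [hA, hB]; ring
    rw [this] at key
    exact key
  · -- tconv V ⊆ P
    intro x hx
    exact hx _ ⟨hPconv, hVP⟩
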